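/- Let λ > 1, R < log₂ λ, ε₁ = λ^{1/R} − 2 > 0, γ > 0, and S : ℕ → {−1,+1}. Define X̌_t = γ·λ^t·Σ_{k=0}^{⌊Rt⌋} (2+ε₁)^{-k} S_k and W_t = X̌_{t+1} − λ·X̌_t. Then |W_t| < γ·λ^{1+1/R} for all t ≥ 0. In particular, choosing γ = Ω/(2·λ^{1+1/R}) gives |W_t| ≤ Ω/2. -/

import Mathlib

open Finset Real

lemma geom_aux {r : ℝ} (h0 : 0 ≤ r) (h1 : r < 1) (n : ℕ) :
    ∑ i ∈ range n, r ^ i ≤ (1 - r)⁻¹ := by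
  have hne : r ≠ 1 := ne_of_lt h1
  rw [geom_sum_eq hne]
  have hpow : 0 ≤ r ^ n := pow_nonneg h0 n
  have h1r : 0 < 1 - r := by linarith
  rw [div_le_iff_of_neg (by linarith : r - 1 < 0)]
  have : (1 - r)⁻¹ * (r - 1) = -1 := by
    field_simp
    ring
  linarith

/-- Boundedness of the simulated disturbance in the anytime-encoding
construction. -/
theorem stmt_4 (lam R ε₁ γ Om : ℝ) (hlam : 1 < lam) (hR : 0 < R)
    (hRlog : R < Real.logb 2 lam)
    (hε : ε₁ = lam ^ (1 / R) - 2) (hε₁ : 0 < ε₁) (hγ : 0 < γ)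
    (S : ℕ → ℝ) (hS : ∀ k, S k = 1 ∨ S k = -1)
    (Xc W : ℕ → ℝ)
    (hXc : ∀ t, Xc t =
      γ * lam ^ (t : ℕ) * ∑ k ∈ range (⌊R * t⌋₊ + 1), ((2 + ε₁) ^ k)⁻¹ * S k)
    (hWdef : ∀ t, W t = Xc (t + 1) - lam * Xc t) :
    (∀ t, |W t| < γ * lam ^ (1 + 1 / R)) ∧
      (γ = Om / (2 * lam ^ (1 + 1 / R)) → ∀ t, |W t| ≤ Om / 2) := by
  have hlam0 : (0:ℝ) < lam := lt_trans one_pos hlam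
  set q : ℝ := 2 + ε₁ with hq
  have hq1 : 1 < q := by simp only [hq]; linarith
  have hq0 : 0 < q := by linarith
  have hqr : q = lam ^ (1/R) := by rw [hq, hε]; ring
  have hrlt : q⁻¹ < 1 := inv_lt_one_of_one_lt₀ hq1
  have hr0 : 0 ≤ q⁻¹ := inv_nonneg.mpr hq0.le
  have main : ∀ t : ℕ, |W t| < γ * lam ^ (1 + 1/R) := by
    intro t
    set a := ⌊R * t⌋₊ with ha
    set b := ⌊R * ((t:ℕ)+1 : ℕ)⌋₊ with hb
    have hab : a + 1 ≤ b + 1 := by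
      have : R * t ≤ R * ((t:ℕ)+1 : ℕ) := by
        apply mul_le_mul_of_nonneg_left _ hR.le
        push_cast; linarith
      exact Nat.add_le_add_right (Nat.floor_le_floor this) 1
    have hW : W t = γ * lam ^ (t+1) *
        ∑ k ∈ Ico (a+1) (b+1), (q ^ k)⁻¹ * S k := by
      rw [hWdef, hXc, hXc, Finset.sum_Ico_eq_sub _ hab, ← ha, ← hb]
      ring
    -- bound on the sum
    have hsum : |∑ k ∈ Ico (a+1) (b+1), (q ^ k)⁻¹ * S k| ≤ (q ^ a)⁻¹ / (q - 1) := by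
      calc |∑ k ∈ Ico (a+1) (b+1), (q ^ k)⁻¹ * S k|
          ≤ ∑ k ∈ Ico (a+1) (b+1), |(q ^ k)⁻¹ * S k| := Finset.abs_sum_le_sum_abs _ _
        _ = ∑ k ∈ Ico (a+1) (b+1), (q⁻¹) ^ k := by
            apply Finset.sum_congr rfl
            intro k _
            rcases hS k with h | h <;>
              simp [h, abs_mul, abs_of_nonneg (inv_nonneg.mpr (pow_nonneg hq0.le k)),
                inv_pow]
        _ = ∑ j ∈ range (b+1-(a+1)), (q⁻¹) ^ (a+1+j) := by
            rw [Finset.sum_Ico_eq_sum_range]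
        _ = (q⁻¹) ^ (a+1) * ∑ j ∈ range (b+1-(a+1)), (q⁻¹) ^ j := by
            rw [Finset.mul_sum]
            exact Finset.sum_congr rfl fun j _ => (pow_add _ _ _)
        _ ≤ (q⁻¹) ^ (a+1) * (1 - q⁻¹)⁻¹ := by
            apply mul_le_mul_of_nonneg_left (geom_aux hr0 hrlt _)
              (pow_nonneg hr0 _)
        _ = (q ^ a)⁻¹ / (q - 1) := by
            have hq0' : q ≠ 0 := ne_of_gt hq0
            have hq1' : q - 1 ≠ 0 := ne_of_gt (by linarith)
            rw [inv_pow]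
            field_simp
            ring
    have hexp : lam ^ (t+1) * (q ^ a)⁻¹ ≤ lam ^ (1 + 1/R) := by
      have h1 : R * t < (a:ℝ) + 1 := by
        have := Nat.lt_floor_add_one (R * t)
        push_cast at this ⊢; linarith
      have key : ((t:ℝ)+1) - (a:ℝ)/R ≤ 1 + 1/R := by
        have h3 : (t:ℝ) ≤ (a:ℝ)/R + 1/R := by
          rw [← add_div, le_div_iff₀ hR]
          nlinarith
        linarith
      have expand : lam ^ (t+1) * (q ^ a)⁻¹ = lam ^ (((t:ℝ)+1) - (a:ℝ)/R) := by
        rw [hqr, ← Real.rpow_natCast (lam ^ (1/R)) a,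
          ← Real.rpow_natCast lam (t+1), ← Real.rpow_mul hlam0.le,
          ← Real.rpow_neg hlam0.le, ← Real.rpow_add hlam0]
        congr 1
        push_cast
        ring
      rw [expand]
      exact Real.rpow_le_rpow_left_iff hlam |>.mpr key
    have hpos : (0:ℝ) < lam ^ (t+1) := pow_pos hlam0 _
    have hqa : (0:ℝ) < (q ^ a)⁻¹ := inv_pos.mpr (pow_pos hq0 _)
    calc |W t| = γ * lam ^ (t+1) * |∑ k ∈ Ico (a+1) (b+1), (q ^ k)⁻¹ * S k| := by
          rw [hW, abs_mul, abs_of_pos (mul_pos hγ hpos)]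
      _ ≤ γ * lam ^ (t+1) * ((q ^ a)⁻¹ / (q - 1)) :=
          mul_le_mul_of_nonneg_left hsum (mul_pos hγ hpos).le
      _ < γ * lam ^ (t+1) * (q ^ a)⁻¹ := by
          apply mul_lt_mul_of_pos_left _ (mul_pos hγ hpos)
          rw [div_lt_iff₀ (by linarith : (0:ℝ) < q - 1)]
          nlinarith
      _ = γ * (lam ^ (t+1) * (q ^ a)⁻¹) := by ring
      _ ≤ γ * lam ^ (1 + 1/R) := mul_le_mul_of_nonneg_left hexp hγ.le
  refine ⟨main, fun hγOm t => ?_⟩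
  have h := main t
  have hlr : (0:ℝ) < lam ^ (1 + 1/R) := Real.rpow_pos_of_pos hlam0 _
  rw [hγOm] at h
  calc |W t| ≤ Om / (2 * lam ^ (1 + 1/R)) * lam ^ (1 + 1/R) := h.le
    _ = Om / 2 := by
        field_simp
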